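/- If β = λ and λ ≠ 1/2 (equivalently λ = β and λ ≠ 1−β), then the non-unital associative subalgebra of the 4×4 real matrices generated by {l_o, l_a, l_b} equals M₂, the subspace of matrices whose only possibly nonzero entries are at positions (1,1), (2,1), (2,2), (3,1), (3,2), (3,3), (4,1), (4,2), (4,3). -/

import Mathlib

/-- The matrix of left multiplication by `o` in `B'(l, β)` in the ordered basis
`(o, a, b, ab)`: `l_o = E₁₁ + l·E₂₂ + l·E₃₃`. -/
noncomputable def lMo (l β : ℝ) : Matrix (Fin 4) (Fin 4) ℝ :=
  !![1, 0, 0, 0;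
     0, l, 0, 0;
     0, 0, l, 0;
     0, 0, 0, 0]

/-- The matrix of left multiplication by `a` in `B'(l, β)`:
`l_a = l·E₂₁ + E₂₂ + ((l-β)/l)·E₂₃ + ((l+β-1)/l)·E₃₃ + E₄₃`. -/
noncomputable def lMa (l β : ℝ) : Matrix (Fin 4) (Fin 4) ℝ :=
  !![0, 0, 0, 0;
     l, 1, (l - β) / l, 0;
     0, 0, (l + β - 1) / l, 0;
     0, 0, 1, 0]

/-- The matrix of left multiplication by `b` in `B'(l, β)`:
`l_b = ((l-β)/l)·E₂₂ + l·E₃₁ + ((l+β-1)/l)·E₃₂ + E₃₃ + E₄₂`. -/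
noncomputable def lMb (l β : ℝ) : Matrix (Fin 4) (Fin 4) ℝ :=
  !![0, 0, 0, 0;
     0, (l - β) / l, 0, 0;
     l, (l + β - 1) / l, 1, 0;
     0, 1, 0, 0]

/-- `M₂`: the 4×4 real matrices whose only possibly nonzero entries are at the
(1-indexed) positions (1,1), (2,1), (2,2), (3,1), (3,2), (3,3), (4,1), (4,2), (4,3). -/
def Mset2 : Set (Matrix (Fin 4) (Fin 4) ℝ) :=
  {m | m 0 1 = 0 ∧ m 0 2 = 0 ∧ m 0 3 = 0 ∧ m 1 2 = 0 ∧ m 1 3 = 0 ∧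
       m 2 3 = 0 ∧ m 3 3 = 0}

/-- Matrix units (and `P = E₂₂ + E₃₃`) as explicit matrices. -/
def E00 : Matrix (Fin 4) (Fin 4) ℝ := !![1,0,0,0;0,0,0,0;0,0,0,0;0,0,0,0]
def E10 : Matrix (Fin 4) (Fin 4) ℝ := !![0,0,0,0;1,0,0,0;0,0,0,0;0,0,0,0]
def E11 : Matrix (Fin 4) (Fin 4) ℝ := !![0,0,0,0;0,1,0,0;0,0,0,0;0,0,0,0]
def E20 : Matrix (Fin 4) (Fin 4) ℝ := !![0,0,0,0;0,0,0,0;1,0,0,0;0,0,0,0]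
def E21 : Matrix (Fin 4) (Fin 4) ℝ := !![0,0,0,0;0,0,0,0;0,1,0,0;0,0,0,0]
def E22 : Matrix (Fin 4) (Fin 4) ℝ := !![0,0,0,0;0,0,0,0;0,0,1,0;0,0,0,0]
def E30 : Matrix (Fin 4) (Fin 4) ℝ := !![0,0,0,0;0,0,0,0;0,0,0,0;1,0,0,0]
def E31 : Matrix (Fin 4) (Fin 4) ℝ := !![0,0,0,0;0,0,0,0;0,0,0,0;0,1,0,0]
def E32 : Matrix (Fin 4) (Fin 4) ℝ := !![0,0,0,0;0,0,0,0;0,0,0,0;0,0,1,0]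
def Pl : Matrix (Fin 4) (Fin 4) ℝ := !![0,0,0,0;0,1,0,0;0,0,1,0;0,0,0,0]

/-- `Mset2` as a non-unital subalgebra. -/
def S2 : NonUnitalSubalgebra ℝ (Matrix (Fin 4) (Fin 4) ℝ) where
  carrier := Mset2
  add_mem' := by
    rintro m n ⟨h1,h2,h3,h4,h5,h6,h7⟩ ⟨g1,g2,g3,g4,g5,g6,g7⟩
    simp_all [Mset2, Matrix.add_apply]
  zero_mem' := by simp [Mset2]
  mul_mem' := by
    rintro m n ⟨h1,h2,h3,h4,h5,h6,h7⟩ ⟨g1,g2,g3,g4,g5,g6,g7⟩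
    refine ⟨?_,?_,?_,?_,?_,?_,?_⟩ <;>
      simp_all [Mset2, Matrix.mul_apply, Fin.sum_univ_four, Matrix.vecHead, Matrix.vecTail]
  smul_mem' := by
    rintro c m ⟨h1,h2,h3,h4,h5,h6,h7⟩
    simp_all [Mset2, Matrix.smul_apply]

set_option maxHeartbeats 4000000 in
/-- If `β = l` and `l ≠ 1/2` (equivalently `l = β` and `l ≠ 1 - β`), the non-unital
associative subalgebra of the 4×4 real matrices generated by `{l_o, l_a, l_b}` equals `M₂`. -/
theorem stmt_17 (l β : ℝ) (hl0 : 0 < l) (hl1 : l < 1) (hβ0 : 0 < β) (hβ1 : β < 1)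
    (hβ : β = l) (hl : l ≠ 1 / 2) :
    (NonUnitalAlgebra.adjoin ℝ
        ({lMo l β, lMa l β, lMb l β} : Set (Matrix (Fin 4) (Fin 4) ℝ)) :
      Set (Matrix (Fin 4) (Fin 4) ℝ)) = Mset2 := by
  replace hβ : l = β := hβ.symm
  subst hβ
  have hl' : l ≠ 0 := ne_of_gt hl0
  have h1l : (1 : ℝ) - l ≠ 0 := by intro h; linarith
  have hl1' : l - 1 ≠ 0 := by intro h; linarith
  have h2l : 2 * l - 1 ≠ 0 := by intro h; apply hl; linarith
  have h2l'' : -1 + l * 2 ≠ 0 := by intro h; apply hl; linarith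
  set A := NonUnitalAlgebra.adjoin ℝ
      ({lMo l l, lMa l l, lMb l l} : Set (Matrix (Fin 4) (Fin 4) ℝ)) with hA
  have ho : lMo l l ∈ A := NonUnitalAlgebra.subset_adjoin ℝ (by simp)
  have ha : lMa l l ∈ A := NonUnitalAlgebra.subset_adjoin ℝ (by simp)
  have hb : lMb l l ∈ A := NonUnitalAlgebra.subset_adjoin ℝ (by simp)
  have h00 : E00 ∈ A := by
    have e : E00 = (1 - l)⁻¹ • (lMo l l * lMo l l - l • lMo l l) := by
      ext i j
      fin_cases i <;> fin_cases j <;>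
        simp [E00, lMo, Matrix.mul_apply, Fin.sum_univ_four, Matrix.vecHead, Matrix.vecTail] <;>
        (try field_simp) <;> (try ring) <;> (try tauto)
    rw [e]
    exact SMulMemClass.smul_mem _ (sub_mem (mul_mem ho ho) (SMulMemClass.smul_mem _ ho))
  have hP : Pl ∈ A := by
    have e : Pl = l⁻¹ • (lMo l l - E00) := by
      ext i j
      fin_cases i <;> fin_cases j <;>
        simp [Pl, E00, lMo, Matrix.vecHead, Matrix.vecTail] <;>
        (try field_simp) <;> (try ring) <;> (try tauto)
    rw [e]
    exact SMulMemClass.smul_mem _ (sub_mem ho h00)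
  have h32 : E32 ∈ A := by
    have e : E32 = lMa l l - Pl * lMa l l := by
      ext i j
      fin_cases i <;> fin_cases j <;>
        simp [E32, Pl, lMa, Matrix.mul_apply, Fin.sum_univ_four, Matrix.vecHead, Matrix.vecTail] <;>
        (try field_simp) <;> (try ring) <;> (try tauto)
    rw [e]; exact sub_mem ha (mul_mem hP ha)
  have h31 : E31 ∈ A := by
    have e : E31 = lMb l l - Pl * lMb l l := by
      ext i j
      fin_cases i <;> fin_cases j <;>
        simp [E31, Pl, lMb, Matrix.mul_apply, Fin.sum_univ_four, Matrix.vecHead, Matrix.vecTail] <;>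
        (try field_simp) <;> (try ring) <;> (try tauto)
    rw [e]; exact sub_mem hb (mul_mem hP hb)
  have h10 : E10 ∈ A := by
    have e : E10 = l⁻¹ • (lMa l l - lMa l l * Pl) := by
      ext i j
      fin_cases i <;> fin_cases j <;>
        simp [E10, Pl, lMa, Matrix.mul_apply, Fin.sum_univ_four, Matrix.vecHead, Matrix.vecTail] <;>
        (try field_simp) <;> (try ring) <;> (try tauto)
    rw [e]; exact SMulMemClass.smul_mem _ (sub_mem ha (mul_mem ha hP))
  have h20 : E20 ∈ A := by
    have e : E20 = l⁻¹ • (lMb l l - lMb l l * Pl) := by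
      ext i j
      fin_cases i <;> fin_cases j <;>
        simp [E20, Pl, lMb, Matrix.mul_apply, Fin.sum_univ_four, Matrix.vecHead, Matrix.vecTail] <;>
        (try field_simp) <;> (try ring) <;> (try tauto)
    rw [e]; exact SMulMemClass.smul_mem _ (sub_mem hb (mul_mem hb hP))
  -- Y = a*b - … = c²E21 + cE22 + lE30, X = b*a - … = cE21 + cE22 + lE30, c = (2l-1)/l
  have hY : lMa l l * lMb l l - ((2 * l - 1)) • E20 - ((2 * l - 1) / l) • E31 - E32 ∈ A :=
    sub_mem (sub_mem (sub_mem (mul_mem ha hb) (SMulMemClass.smul_mem _ h20))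
      (SMulMemClass.smul_mem _ h31)) h32
  have hX : lMb l l * lMa l l - ((2 * l - 1)) • E20 - E31 ∈ A :=
    sub_mem (sub_mem (mul_mem hb ha) (SMulMemClass.smul_mem _ h20)) h31
  have h21 : E21 ∈ A := by
    have e : E21 = (l * l / ((2 * l - 1) * (l - 1))) •
        ((lMa l l * lMb l l - ((2 * l - 1)) • E20 - ((2 * l - 1) / l) • E31 - E32) -
         (lMb l l * lMa l l - ((2 * l - 1)) • E20 - E31)) := by
      ext i j
      fin_cases i <;> fin_cases j <;>
        simp [E21, E20, E31, E32, lMa, lMb, Matrix.mul_apply, Fin.sum_univ_four, Matrix.vecHead, Matrix.vecTail] <;>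
        (try field_simp) <;> (try ring) <;> (try tauto) <;>
        field_simp [h2l''] <;> ring
    rw [e]; exact SMulMemClass.smul_mem _ (sub_mem hY hX)
  have hZ : lMb l l * lMa l l - ((2 * l - 1)) • E20 - E31 - ((2 * l - 1) / l) • E21 ∈ A :=
    sub_mem hX (SMulMemClass.smul_mem _ h21)
  have h22 : E22 ∈ A := by
    have e : E22 = (l / (2 * l - 1)) •
        ((lMb l l * lMa l l - ((2 * l - 1)) • E20 - E31 - ((2 * l - 1) / l) • E21) * Pl) := by
      ext i j
      fin_cases i <;> fin_cases j <;>
        simp [E22, E21, E20, E31, Pl, lMa, lMb, Matrix.mul_apply, Fin.sum_univ_four, Matrix.vecHead, Matrix.vecTail] <;>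
        (try field_simp) <;> (try ring) <;> (try tauto) <;>
        field_simp [h2l''] <;> ring
    rw [e]; exact SMulMemClass.smul_mem _ (mul_mem hZ hP)
  have h11 : E11 ∈ A := by
    have e : E11 = Pl - E22 := by
      ext i j
      fin_cases i <;> fin_cases j <;> simp [E11, E22, Pl, Matrix.vecHead, Matrix.vecTail]
    rw [e]; exact sub_mem hP h22
  have h30 : E30 ∈ A := by
    have e : E30 = l⁻¹ •
        (lMb l l * lMa l l - ((2 * l - 1)) • E20 - E31 - ((2 * l - 1) / l) • E21 -
          ((2 * l - 1) / l) • E22) := by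
      ext i j
      fin_cases i <;> fin_cases j <;>
        simp [E30, E22, E21, E20, E31, lMa, lMb, Matrix.mul_apply, Fin.sum_univ_four, Matrix.vecHead, Matrix.vecTail] <;>
        (try field_simp) <;> (try ring) <;> (try tauto)
    rw [e]
    exact SMulMemClass.smul_mem _ (sub_mem hZ (SMulMemClass.smul_mem _ h22))
  apply Set.Subset.antisymm
  · intro x hx
    have hgen : ({lMo l l, lMa l l, lMb l l} : Set (Matrix (Fin 4) (Fin 4) ℝ)) ⊆ S2 := by
      intro y hy
      rcases hy with rfl | rfl | rfl <;>
        exact ⟨by simp [lMo, lMa, lMb, Matrix.vecHead, Matrix.vecTail], by simp [lMo, lMa, lMb, Matrix.vecHead, Matrix.vecTail], by simp [lMo, lMa, lMb, Matrix.vecHead, Matrix.vecTail],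
               by simp [lMo, lMa, lMb, Matrix.vecHead, Matrix.vecTail], by simp [lMo, lMa, lMb, Matrix.vecHead, Matrix.vecTail], by simp [lMo, lMa, lMb, Matrix.vecHead, Matrix.vecTail],
               by simp [lMo, lMa, lMb, Matrix.vecHead, Matrix.vecTail]⟩
    exact NonUnitalAlgebra.adjoin_le hgen hx
  · rintro m ⟨g1, g2, g3, g4, g5, g6, g7⟩
    have e : m = m 0 0 • E00 + m 1 0 • E10 + m 1 1 • E11 +
        m 2 0 • E20 + m 2 1 • E21 + m 2 2 • E22 +
        m 3 0 • E30 + m 3 1 • E31 + m 3 2 • E32 := by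
      ext i j
      fin_cases i <;> fin_cases j <;>
        simp [E00, E10, E11, E20, E21, E22, E30, E31, E32, Matrix.vecHead, Matrix.vecTail,
          Matrix.add_apply, Matrix.smul_apply, g1, g2, g3, g4, g5, g6, g7]
    rw [e]
    exact add_mem (add_mem (add_mem (add_mem (add_mem (add_mem (add_mem (add_mem
      (SMulMemClass.smul_mem _ h00) (SMulMemClass.smul_mem _ h10))
      (SMulMemClass.smul_mem _ h11)) (SMulMemClass.smul_mem _ h20))
      (SMulMemClass.smul_mem _ h21)) (SMulMemClass.smul_mem _ h22))
      (SMulMemClass.smul_mem _ h30)) (SMulMemClass.smul_mem _ h31))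
      (SMulMemClass.smul_mem _ h32)
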